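/- For all n ≥ 1 and k ≥ 0, we have b_{n,k}({213, 312}) = C(n, 2k+1), where b_{n,k}({213,312}) is the number of permutations in S_n avoiding both 213 and 312 that have exactly k big descents. -/

import Mathlib

open scoped Classical

/-- A permutation `π` of `Fin n` contains the pattern `σ` (a permutation of `Fin m`)
if some subsequence of the one-line notation of `π` standardizes to `σ`. -/
def Contains {n m : ℕ} (π : Equiv.Perm (Fin n)) (σ : Equiv.Perm (Fin m)) : Prop :=
  ∃ f : Fin m → Fin n, StrictMono f ∧ ∀ a b : Fin m, σ a < σ b ↔ π (f a) < π (f b)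

/-- `π` avoids the pattern `σ`. -/
def Avoids {n m : ℕ} (π : Equiv.Perm (Fin n)) (σ : Equiv.Perm (Fin m)) : Prop :=
  ¬ Contains π σ

/-- The pattern 123 (identity, in 0-indexed one-line notation `[0,1,2]`). -/
def perm123 : Equiv.Perm (Fin 3) := 1

/-- The pattern 132 (0-indexed one-line notation `[0,2,1]`). -/
def perm132 : Equiv.Perm (Fin 3) := ⟨![0, 2, 1], ![0, 2, 1], by decide, by decide⟩

/-- The pattern 213 (0-indexed one-line notation `[1,0,2]`). -/
def perm213 : Equiv.Perm (Fin 3) := ⟨![1, 0, 2], ![1, 0, 2], by decide, by decide⟩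

/-- The pattern 231 (0-indexed one-line notation `[1,2,0]`). -/
def perm231 : Equiv.Perm (Fin 3) := ⟨![1, 2, 0], ![2, 0, 1], by decide, by decide⟩

/-- The pattern 312 (0-indexed one-line notation `[2,0,1]`). -/
def perm312 : Equiv.Perm (Fin 3) := ⟨![2, 0, 1], ![1, 2, 0], by decide, by decide⟩

/-- The pattern 321 (0-indexed one-line notation `[2,1,0]`). -/
def perm321 : Equiv.Perm (Fin 3) := ⟨![2, 1, 0], ![2, 1, 0], by decide, by decide⟩

/-- The number of big descents of `π`: 0-indexed positions `k` with `π k > π (k+1) + 1`. -/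
def bdes {n : ℕ} (π : Equiv.Perm (Fin n)) : ℕ :=
  ((Finset.range n).filter fun k =>
    ∃ hk : k + 1 < n, (π ⟨k + 1, hk⟩ : ℕ) + 1 < (π ⟨k, Nat.lt_of_succ_lt hk⟩ : ℕ)).card

/-- For `n ≥ 1`, the number of permutations of length `n` avoiding both 213 and 312 with
exactly `k` big descents is `C(n, 2k+1)`. -/
def NoValley {n : ℕ} (π : Equiv.Perm (Fin n)) : Prop :=
  ∀ i j k : Fin n, i < j → j < k → π j < π i → π j < π k → False

private lemma strictMono3 {n : ℕ} {i j k : Fin n} (hij : i < j) (hjk : j < k) :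
    StrictMono ![i, j, k] := by
  intro a b hab
  fin_cases a <;> fin_cases b <;>
    first
      | exact absurd hab (by decide)
      | exact hij
      | exact hjk
      | exact lt_trans hij hjk

theorem avoids_iff {n : ℕ} (π : Equiv.Perm (Fin n)) :
    (Avoids π perm213 ∧ Avoids π perm312) ↔ NoValley π := by
  constructor
  · rintro ⟨h1, h2⟩ i j k hij hjk hji hjk'
    rcases lt_or_gt_of_ne (fun h => absurd (π.injective h) (ne_of_lt (lt_trans hij hjk))) with hik | hik
    · refine h1 ⟨![i, j, k], strictMono3 hij hjk, ?_⟩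
      intro a b
      fin_cases a <;> fin_cases b <;>
        first
          | exact iff_of_false (by decide) (lt_irrefl _)
          | exact iff_of_false (by decide) (lt_asymm hji)
          | exact iff_of_true (by decide) hik
          | exact iff_of_true (by decide) hji
          | exact iff_of_true (by decide) (lt_trans hji hik)
          | exact iff_of_false (by decide) (lt_asymm hik)
          | exact iff_of_false (by decide) (lt_asymm (lt_trans hji hik))
    · refine h2 ⟨![i, j, k], strictMono3 hij hjk, ?_⟩
      intro a b
      fin_cases a <;> fin_cases b <;>
        first
          | exact iff_of_false (by decide) (lt_irrefl _)
          | exact iff_of_false (by decide) (lt_asymm (lt_trans hjk' hik))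
          | exact iff_of_false (by decide) (lt_asymm hik)
          | exact iff_of_true (by decide) (lt_trans hjk' hik)
          | exact iff_of_true (by decide) hjk'
          | exact iff_of_true (by decide) hik
          | exact iff_of_false (by decide) (lt_asymm hjk')
  · intro hnv
    constructor
    · rintro ⟨f, hf, hiff⟩
      exact hnv (f 0) (f 1) (f 2) (hf (by decide)) (hf (by decide))
        ((hiff 1 0).mp (by decide)) ((hiff 1 2).mp (by decide))
    · rintro ⟨f, hf, hiff⟩
      exact hnv (f 0) (f 1) (f 2) (hf (by decide)) (hf (by decide))
        ((hiff 1 0).mp (by decide)) ((hiff 1 2).mp (by decide))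


namespace BD
variable {n : ℕ}

/-- The unimodal permutation with ascending value set `A`. -/
def uniFun (n : ℕ) (A : Finset ℕ) (hsub : A ⊆ Finset.range n) : Fin n → Fin n := fun i =>
  if h : (i : ℕ) < A.card then
    ⟨A.orderEmbOfFin rfl ⟨i, h⟩,
      Finset.mem_range.mp (hsub (A.orderEmbOfFin_mem rfl ⟨i, h⟩))⟩
  else
    ⟨(Finset.range n \ A).orderEmbOfFin rfl
        ⟨n - 1 - i, by
          have hc : (Finset.range n \ A).card = n - A.card := by
            rw [Finset.card_sdiff_of_subset hsub, Finset.card_range]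
          have h1 : A.card ≤ (i : ℕ) := le_of_not_gt h
          have h2 : (i : ℕ) < n := i.isLt
          omega⟩,
      Finset.mem_range.mp
        ((Finset.mem_sdiff.mp ((Finset.range n \ A).orderEmbOfFin_mem rfl _)).1)⟩

variable {A : Finset ℕ} (hsub : A ⊆ Finset.range n)
include hsub

lemma uniFun_lt {i : Fin n} (h : (i : ℕ) < A.card) :
    (uniFun n A hsub i : ℕ) = A.orderEmbOfFin rfl ⟨i, h⟩ := by
  simp [uniFun, h]

lemma uniFun_ge {i : Fin n} (h : ¬ (i : ℕ) < A.card) :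
    (uniFun n A hsub i : ℕ) = (Finset.range n \ A).orderEmbOfFin rfl
      ⟨n - 1 - i, by
        have hc : (Finset.range n \ A).card = n - A.card := by
          rw [Finset.card_sdiff_of_subset hsub, Finset.card_range]
        have h2 : (i : ℕ) < n := i.isLt
        omega⟩ := by
  simp [uniFun, h]

lemma uniFun_mem_lt {i : Fin n} (h : (i : ℕ) < A.card) : (uniFun n A hsub i : ℕ) ∈ A := by
  rw [uniFun_lt hsub h]; exact A.orderEmbOfFin_mem rfl _

lemma uniFun_mem_ge {i : Fin n} (h : ¬ (i : ℕ) < A.card) :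
    (uniFun n A hsub i : ℕ) ∈ Finset.range n \ A := by
  rw [uniFun_ge hsub h]; exact (Finset.range n \ A).orderEmbOfFin_mem rfl _

lemma uniFun_mono {i j : Fin n} (hij : i < j) (hj : (j : ℕ) < A.card) :
    uniFun n A hsub i < uniFun n A hsub j := by
  have hi : (i : ℕ) < A.card := lt_trans hij hj
  rw [Fin.lt_def, uniFun_lt hsub hi, uniFun_lt hsub hj]
  exact (A.orderEmbOfFin rfl).strictMono (show (⟨i, hi⟩ : Fin A.card) < ⟨j, hj⟩ from hij)

lemma uniFun_anti {i j : Fin n} (hij : i < j) (hi : ¬ (i : ℕ) < A.card) :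
    uniFun n A hsub j < uniFun n A hsub i := by
  have hj : ¬ (j : ℕ) < A.card := fun hj => hi (lt_trans hij hj)
  rw [Fin.lt_def, uniFun_ge hsub hi, uniFun_ge hsub hj]
  refine ((Finset.range n \ A).orderEmbOfFin rfl).strictMono ?_
  have h2 : (j : ℕ) < n := j.isLt
  exact show (n : ℕ) - 1 - (j : ℕ) < n - 1 - (i : ℕ) by omega

lemma uniFun_injective : Function.Injective (uniFun n A hsub) := by
  intro i j hij
  by_contra hne
  rcases lt_or_gt_of_ne (fun h : i = j => hne h) with h | h
  · by_cases hj : (j : ℕ) < A.card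
    · exact absurd hij (ne_of_lt (uniFun_mono hsub h hj))
    · by_cases hi : (i : ℕ) < A.card
      · have h1 := uniFun_mem_lt hsub hi
        have h2 := uniFun_mem_ge hsub hj
        rw [hij] at h1
        exact (Finset.mem_sdiff.mp h2).2 h1
      · exact absurd hij.symm (ne_of_lt (uniFun_anti hsub h hi))
  · by_cases hi : (i : ℕ) < A.card
    · exact absurd hij.symm (ne_of_lt (uniFun_mono hsub h hi))
    · by_cases hj : (j : ℕ) < A.card
      · have h1 := uniFun_mem_lt hsub hj
        have h2 := uniFun_mem_ge hsub hi
        rw [← hij] at h1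
        exact (Finset.mem_sdiff.mp h2).2 h1
      · exact absurd hij (ne_of_lt (uniFun_anti hsub h hj))

/-- The unimodal permutation. -/
noncomputable def uniPerm (n : ℕ) (A : Finset ℕ) (hsub : A ⊆ Finset.range n) : Equiv.Perm (Fin n) :=
  Equiv.ofBijective (uniFun n A hsub)
    (Finite.injective_iff_bijective.mp (uniFun_injective hsub))

lemma uniPerm_apply (i : Fin n) : uniPerm n A hsub i = uniFun n A hsub i := rfl

lemma uniPerm_noValley :
    ∀ i j k : Fin n, i < j → j < k → uniPerm n A hsub j < uniPerm n A hsub i →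
      uniPerm n A hsub j < uniPerm n A hsub k → False := by
  intro i j k hij hjk h1 h2
  by_cases hj : (j : ℕ) < A.card
  · exact absurd (uniPerm_apply (A := A) hsub i ▸ uniPerm_apply hsub j ▸
      uniFun_mono hsub hij hj) (lt_asymm h1)
  · exact absurd (uniPerm_apply (A := A) hsub j ▸ uniPerm_apply hsub k ▸
      uniFun_anti hsub hjk hj) (lt_asymm h2)

lemma card_le_of_subset_range : A.card ≤ n := by
  simpa using Finset.card_le_card hsub

lemma uniFun_peak (hmem : n - 1 ∈ A) (i : Fin n) (hi : (i : ℕ) = A.card - 1) :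
    (uniFun n A hsub i : ℕ) = n - 1 := by
  have h1 : 1 ≤ A.card := Finset.card_pos.mpr ⟨n - 1, hmem⟩
  have hlt : (i : ℕ) < A.card := by omega
  rw [uniFun_lt hsub hlt]
  have hlast := Finset.orderEmbOfFin_last (s := A) rfl h1
  rw [show (⟨(i : ℕ), hlt⟩ : Fin A.card) = ⟨A.card - 1, by omega⟩ by
        exact Fin.ext (by simpa using hi), hlast]
  refine le_antisymm ?_ (Finset.le_max' _ _ hmem)
  have h4 := A.max'_mem (Finset.card_pos.mp h1)
  have := Finset.mem_range.mp (hsub h4)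
  omega

/-- The target value set. -/
def VS (n : ℕ) (A : Finset ℕ) : Finset ℕ :=
  (Finset.range n \ A).filter (fun v => v + 1 ∈ A ∧ v + 1 ≠ n - 1)

lemma bdes_uniPerm (hmem : n - 1 ∈ A) :
    bdes (uniPerm n A hsub) = (VS n A).card := by
  have hcard1 : 1 ≤ A.card := Finset.card_pos.mpr ⟨n - 1, hmem⟩
  unfold bdes
  refine Finset.card_bij
    (fun a ha => (uniFun n A hsub ⟨a + 1,
      ((Finset.mem_filter.mp ha).2).choose⟩ : ℕ)) ?_ ?_ ?_
  · -- maps into VS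
    intro a ha
    obtain ⟨han, hk, hbig⟩ :
        a ∈ Finset.range n ∧ ∃ hk : a + 1 < n,
          (uniPerm n A hsub ⟨a + 1, hk⟩ : ℕ) + 1
            < (uniPerm n A hsub ⟨a, Nat.lt_of_succ_lt hk⟩ : ℕ) := by
      have := Finset.mem_filter.mp ha
      exact ⟨this.1, this.2⟩
    set j : Fin n := ⟨a + 1, hk⟩ with hj
    set i : Fin n := ⟨a, Nat.lt_of_succ_lt hk⟩ with hi
    rw [uniPerm_apply, uniPerm_apply] at hbig
    have hij : i < j := by simp [hi, hj, Fin.lt_def]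
    have hjge : ¬ ((j : ℕ) < A.card) := by
      intro hjlt
      exact absurd (uniFun_mono hsub hij hjlt) (by omega)
    set v : ℕ := (uniFun n A hsub j : ℕ) with hv
    have hvmem : v ∈ Finset.range n \ A := uniFun_mem_ge hsub hjge
    have hfa_lt : (uniFun n A hsub i : ℕ) ≤ n - 1 := by
      have := (uniFun n A hsub i).isLt; omega
    have hvlt : v + 1 < n - 1 ∨ v + 1 = (uniFun n A hsub i : ℕ) ∧ v + 1 ≤ n - 1 := by omega
    have hv1n : v + 1 < n := by omega
    have hv1A : v + 1 ∈ A := by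
      by_contra hnA
      have hv1mem : (⟨v + 1, hv1n⟩ : Fin n) ∈ Set.range (uniFun n A hsub) := by
        have := (uniPerm n A hsub).surjective ⟨v + 1, hv1n⟩
        obtain ⟨x, hx⟩ := this
        exact ⟨x, hx⟩
      obtain ⟨w, hw⟩ := hv1mem
      have hwval : (uniFun n A hsub w : ℕ) = v + 1 := by rw [hw]
      have hwge : ¬ ((w : ℕ) < A.card) := by
        intro hwlt
        exact hnA (hwval ▸ uniFun_mem_lt hsub hwlt)
      -- compare positions w and j
      rcases lt_trichotomy w j with hc | hc | hc
      · rcases lt_trichotomy w i with hd | hd | hd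
        · have := uniFun_anti hsub (show w < i from hd) hwge
          rw [Fin.lt_def, hwval] at this
          omega
        · rw [hd] at hwval; omega
        · -- i < w < j impossible: w strictly between a and a+1
          rw [Fin.lt_def] at hc hd
          simp [hi, hj] at hc hd
          omega
      · rw [hc] at hwval; omega
      · have := uniFun_anti hsub (show j < w from hc) hjge
        rw [Fin.lt_def, hwval] at this
        omega
    refine Finset.mem_filter.mpr ⟨hvmem, hv1A, ?_⟩
    -- v + 1 ≠ n - 1 : since v + 1 < uniFun i ≤ n - 1
    show v + 1 ≠ n - 1
    omega
  · -- injective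
    intro a1 ha1 a2 ha2 heq
    have := uniFun_injective hsub (Fin.ext heq)
    simpa using congrArg Fin.val this
  · -- surjective
    intro v hv
    obtain ⟨hvB, hv1A, hv1ne⟩ :
        v ∈ Finset.range n \ A ∧ v + 1 ∈ A ∧ v + 1 ≠ n - 1 := by
      have := Finset.mem_filter.mp hv
      exact ⟨this.1, this.2.1, this.2.2⟩
    have hv1r : v + 1 ∈ Finset.range n := hsub hv1A
    have hv1lt : v + 1 < n - 1 := by
      have := Finset.mem_range.mp hv1r; omega
    have hvn : v < n := Finset.mem_range.mp (Finset.mem_sdiff.mp hvB).1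
    obtain ⟨j, hjval⟩ : ∃ j : Fin n, (uniFun n A hsub j : ℕ) = v := by
      obtain ⟨x, hx⟩ := (uniPerm n A hsub).surjective ⟨v, hvn⟩
      exact ⟨x, by rw [show uniFun n A hsub x = ⟨v, hvn⟩ from hx]⟩
    have hjge : ¬ ((j : ℕ) < A.card) := by
      intro hjlt
      exact (Finset.mem_sdiff.mp hvB).2 (hjval ▸ uniFun_mem_lt hsub hjlt)
    have hj1 : 1 ≤ (j : ℕ) := by omega
    have hjn : (j : ℕ) < n := j.isLt
    refine ⟨(j : ℕ) - 1, Finset.mem_filter.mpr ⟨Finset.mem_range.mpr (by omega), ?_⟩, ?_⟩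
    · refine ⟨by omega, ?_⟩
      have hjeq : (⟨(j : ℕ) - 1 + 1, by omega⟩ : Fin n) = j := Fin.ext (by simp; omega)
      rw [uniPerm_apply, uniPerm_apply, hjeq, hjval]
      set i : Fin n := ⟨(j : ℕ) - 1, by omega⟩ with hi
      have hij : i < j := by simp [hi, Fin.lt_def]; omega
      by_cases hilt : ((i : ℕ) < A.card)
      · have hieq : (i : ℕ) = A.card - 1 := by simp [hi] at hilt ⊢; omega
        rw [uniFun_peak hsub hmem i hieq]
        omega
      · have hanti := uniFun_anti hsub hij hilt
        rw [Fin.lt_def, hjval] at hanti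
        have hine : (uniFun n A hsub i : ℕ) ≠ v + 1 := by
          intro hcontra
          exact (Finset.mem_sdiff.mp (uniFun_mem_ge hsub hilt)).2 (hcontra ▸ hv1A)
        omega
    · -- value matches
      show (uniFun n A hsub ⟨(j : ℕ) - 1 + 1, by omega⟩ : ℕ) = v
      rw [show (⟨(j : ℕ) - 1 + 1, by omega⟩ : Fin n) = j from Fin.ext (by simp; omega),
        hjval]

lemma mem_iff_pos (v : ℕ) :
    v ∈ A ↔ ∃ hv : v < n, (((uniPerm n A hsub).symm ⟨v, hv⟩ : Fin n) : ℕ) < A.card := by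
  constructor
  · intro hvA
    have hv : v < n := Finset.mem_range.mp (hsub hvA)
    refine ⟨hv, ?_⟩
    have hrange : v ∈ Set.range (A.orderEmbOfFin rfl) := by
      rw [Finset.range_orderEmbOfFin]; exact_mod_cast hvA
    obtain ⟨t, ht⟩ := hrange
    have htn : (t : ℕ) < n := lt_of_lt_of_le t.isLt (card_le_of_subset_range hsub)
    have : uniFun n A hsub ⟨t, htn⟩ = ⟨v, hv⟩ := by
      refine Fin.ext ?_
      rw [uniFun_lt hsub (show ((⟨(t : ℕ), htn⟩ : Fin n) : ℕ) < A.card from t.isLt)]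
      rw [show (⟨((⟨(t : ℕ), htn⟩ : Fin n) : ℕ), t.isLt⟩ : Fin A.card) = t from Fin.ext rfl]
      exact ht
    rw [show ((⟨v, hv⟩ : Fin n)) = uniPerm n A hsub ⟨t, htn⟩ from this.symm ▸ rfl,
      Equiv.symm_apply_apply]
    exact t.isLt
  · rintro ⟨hv, hlt⟩
    have := uniFun_mem_lt hsub hlt
    rwa [show uniFun n A hsub ((uniPerm n A hsub).symm ⟨v, hv⟩) = ⟨v, hv⟩ from
      (uniPerm n A hsub).apply_symm_apply ⟨v, hv⟩] at this

lemma card_eq_pos (hn : 1 ≤ n) (hmem : n - 1 ∈ A) :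
    A.card = (((uniPerm n A hsub).symm ⟨n - 1, by omega⟩ : Fin n) : ℕ) + 1 := by
  have hcard1 : 1 ≤ A.card := Finset.card_pos.mpr ⟨n - 1, hmem⟩
  have hcn : A.card ≤ n := card_le_of_subset_range hsub
  have hpk := uniFun_peak hsub hmem ⟨A.card - 1, by omega⟩ (by simp)
  have : uniPerm n A hsub ⟨A.card - 1, by omega⟩ = ⟨n - 1, by omega⟩ := Fin.ext hpk
  rw [← this, Equiv.symm_apply_apply]
  simp
  omega

lemma uniPerm_inj {A' : Finset ℕ} (hsub' : A' ⊆ Finset.range n) (hn : 1 ≤ n)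
    (hmem : n - 1 ∈ A) (hmem' : n - 1 ∈ A')
    (heq : uniPerm n A hsub = uniPerm n A' hsub') : A = A' := by
  have hc : A.card = A'.card := by
    rw [card_eq_pos hsub hn hmem, card_eq_pos hsub' hn hmem', heq]
  ext v
  rw [mem_iff_pos hsub v, mem_iff_pos hsub' v, heq, hc]

omit hsub in
lemma noValley_eq_uniPerm (π : Equiv.Perm (Fin n)) (hn : 1 ≤ n)
    (hnv : ∀ i j k : Fin n, i < j → j < k → π j < π i → π j < π k → False) :
    ∃ (A : Finset ℕ) (hsub : A ⊆ Finset.range n),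
      n - 1 ∈ A ∧ π = uniPerm n A hsub := by
  have hn1 : n - 1 < n := by omega
  set P : Fin n := π.symm ⟨n - 1, hn1⟩ with hPdef
  have hP : π P = ⟨n - 1, hn1⟩ := π.apply_symm_apply _
  have hmax : ∀ i : Fin n, (π i : ℕ) ≤ n - 1 := fun i => by have := (π i).isLt; omega
  have hinj : Function.Injective π := π.injective
  have inc : ∀ i j : Fin n, i < j → j ≤ P → π i < π j := by
    intro i j hij hjP
    by_contra hcon
    have hne : π j ≠ π i := fun h => absurd (hinj h) (ne_of_lt hij).symm
    have hlt : π j < π i := lt_of_le_of_ne (le_of_not_gt hcon) hne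
    rcases lt_or_eq_of_le hjP with hjP' | hjP'
    · have hjne : π j ≠ π P := fun h => absurd (hinj h) (ne_of_lt hjP')
      have : π j < π P := by
        rw [Fin.lt_def, hP]
        exact lt_of_le_of_ne (hmax j) (fun h => hjne (Fin.ext (by rw [h, hP])))
      exact hnv i j P hij hjP' hlt this
    · rw [hjP'] at hlt
      rw [Fin.lt_def, hP] at hlt
      have : n - 1 < (π i : ℕ) := by simpa using hlt
      exact absurd (hmax i) (by omega)
  have dec : ∀ i j : Fin n, P ≤ i → i < j → π j < π i := by
    intro i j hPi hij
    by_contra hcon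
    have hne : π i ≠ π j := fun h => absurd (hinj h) (ne_of_lt hij)
    have hlt : π i < π j := lt_of_le_of_ne (le_of_not_gt hcon) hne
    rcases lt_or_eq_of_le hPi with hPi' | hPi'
    · have hine : π i ≠ π P := fun h => absurd (hinj h) (ne_of_lt hPi').symm
      have : π i < π P := by
        rw [Fin.lt_def, hP]
        exact lt_of_le_of_ne (hmax i) (fun h => hine (Fin.ext (by rw [h, hP])))
      exact hnv P i j hPi' hij this hlt
    · rw [← hPi'] at hlt
      rw [Fin.lt_def, hP] at hlt
      have : n - 1 < (π j : ℕ) := by simpa using hlt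
      exact absurd (hmax j) (by omega)
  set P1 : ℕ := (P : ℕ) + 1 with hP1
  have hP1n : P1 ≤ n := P.isLt
  set g : Fin P1 → ℕ := fun t => (π ⟨t, lt_of_lt_of_le t.isLt hP1n⟩ : ℕ) with hg
  have hgmono : StrictMono g := by
    intro t t' htt
    have : π ⟨t, _⟩ < π ⟨t', _⟩ :=
      inc ⟨t, lt_of_lt_of_le t.isLt hP1n⟩ ⟨t', lt_of_lt_of_le t'.isLt hP1n⟩
        htt (by rw [Fin.le_def]; have := t'.isLt; simp; omega)
    exact this
  set A : Finset ℕ := Finset.image g Finset.univ with hA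
  have hsubA : A ⊆ Finset.range n := by
    intro v hv
    rw [hA, Finset.mem_image] at hv
    obtain ⟨t, _, ht⟩ := hv
    rw [← ht]
    exact Finset.mem_range.mpr (π _).isLt
  have hcard : A.card = P1 := by
    rw [hA, Finset.card_image_of_injective _ hgmono.injective, Finset.card_univ,
      Fintype.card_fin]
  have hmemA : n - 1 ∈ A := by
    rw [hA, Finset.mem_image]
    exact ⟨⟨P, by omega⟩, Finset.mem_univ _, by
      show (π ⟨(P : ℕ), _⟩ : ℕ) = n - 1
      rw [show (⟨(P : ℕ), _⟩ : Fin n) = P from Fin.ext rfl, hP]⟩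
  have hgemb : ∀ x, g x = A.orderEmbOfFin hcard x := by
    have := Finset.orderEmbOfFin_unique hcard
      (f := g) (fun x => by rw [hA, Finset.mem_image]; exact ⟨x, Finset.mem_univ _, rfl⟩)
      hgmono
    exact fun x => by rw [this]
  set B : Finset ℕ := Finset.range n \ A with hB
  have hBcard : B.card = n - P1 := by
    rw [hB, Finset.card_sdiff_of_subset hsubA, Finset.card_range, hcard]
  set g2 : Fin (n - P1) → ℕ :=
    fun t => (π ⟨n - 1 - t, by omega⟩ : ℕ) with hg2
  have hg2pos : ∀ t : Fin (n - P1), (P : ℕ) < n - 1 - (t : ℕ) := by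
    intro t
    have := t.isLt
    omega
  have hg2mono : StrictMono g2 := by
    intro t t' htt
    have h1 := hg2pos t
    have h2 := hg2pos t'
    have ht := t.isLt
    have ht' := t'.isLt
    exact dec ⟨n - 1 - t', by omega⟩ ⟨n - 1 - t, by omega⟩
      (by rw [Fin.le_def]; simp; omega) (by rw [Fin.lt_def]; simp; omega)
  have hg2B : ∀ t, g2 t ∈ B := by
    intro t
    rw [hB, Finset.mem_sdiff]
    refine ⟨Finset.mem_range.mpr (π _).isLt, ?_⟩
    intro hcon
    rw [hA, Finset.mem_image] at hcon
    obtain ⟨x, _, hx⟩ := hcon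
    have htlt := t.isLt
    have hvals : (π ⟨(x : ℕ), lt_of_lt_of_le x.isLt hP1n⟩ : ℕ)
        = (π ⟨n - 1 - (t : ℕ), by omega⟩ : ℕ) := hx
    have hpos := congrArg Fin.val (hinj (Fin.ext hvals))
    simp only [Fin.val_mk] at hpos
    have h1 := hg2pos t
    have h2 := x.isLt
    omega
  have hg2emb : ∀ x, g2 x = B.orderEmbOfFin hBcard x := by
    have := Finset.orderEmbOfFin_unique hBcard (f := g2) hg2B hg2mono
    exact fun x => by rw [this]
  refine ⟨A, hsubA, hmemA, ?_⟩
  refine Equiv.ext fun i => Fin.ext ?_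
  rw [uniPerm_apply]
  by_cases hi : (i : ℕ) < A.card
  · rw [uniFun_lt hsubA hi]
    have h1 : A.orderEmbOfFin rfl ⟨(i : ℕ), hi⟩
        = A.orderEmbOfFin hcard ⟨(i : ℕ), by omega⟩ := by
      simp only [Finset.orderEmbOfFin_apply, Fin.getElem_fin]
    rw [h1, ← hgemb ⟨(i : ℕ), by omega⟩]
  · rw [uniFun_ge hsubA hi]
    rw [hcard] at hi
    have hin : (i : ℕ) < n := i.isLt
    have hidx : n - 1 - (i : ℕ) < (Finset.range n \ A).card := by
      rw [← hB, hBcard]; omega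
    have h1 : B.orderEmbOfFin rfl ⟨n - 1 - (i : ℕ), hidx⟩
        = B.orderEmbOfFin hBcard ⟨n - 1 - (i : ℕ), by omega⟩ := by
      simp only [Finset.orderEmbOfFin_apply, Fin.getElem_fin]
    rw [h1, ← hg2emb ⟨n - 1 - (i : ℕ), by omega⟩]
    have h3 : (⟨n - 1 - (n - 1 - (i : ℕ)), by omega⟩ : Fin n) = i :=
      Fin.ext (by simp; omega)
    show (π i : ℕ) = (π ⟨n - 1 - (n - 1 - (i : ℕ)), by omega⟩ : ℕ)
    rw [h3]

omit hsub

/-- Indicator sequence: `z 0 = true`, `z j = (j-1 ∈ A)` for `1 ≤ j < n`, `z j = false` for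
`j ≥ n`. -/
def zf (n : ℕ) (A : Finset ℕ) (j : ℕ) : Prop := j = 0 ∨ (j < n ∧ j - 1 ∈ A)

/-- The set of sign changes. -/
noncomputable def SAset (n : ℕ) (A : Finset ℕ) : Finset ℕ :=
  (Finset.range n).filter (fun j => ¬ (zf n A j ↔ zf n A (j + 1)))

lemma alt_count (z : ℕ → Prop) (m : ℕ) :
    ((Finset.range m).filter (fun j => z j ∧ ¬ z (j + 1))).card + (if z m then 1 else 0)
      = ((Finset.range m).filter (fun j => ¬ z j ∧ z (j + 1))).card
        + (if z 0 then 1 else 0) := by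
  induction m with
  | zero => simp
  | succ m ih =>
    rw [Finset.range_add_one, Finset.filter_insert, Finset.filter_insert]
    have key : ∀ p : ℕ → Prop, ∀ hp : DecidablePred p,
        (insert m ((Finset.range m).filter p)).card
          = ((Finset.range m).filter p).card + 1 := fun p hp =>
      Finset.card_insert_of_notMem (fun h => by
        simpa using (Finset.mem_range.mp (Finset.mem_filter.mp h).1))
    by_cases hz : z m <;> by_cases hz' : z (m + 1) <;>
      simp only [hz, hz', if_pos, if_neg, not_true, not_false_iff, and_true, and_false,
        true_and, false_and, if_true, if_false, key, ite_true, ite_false,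
        eq_self_iff_true, not_false_eq_true] <;>
      simp [hz, hz'] at ih ⊢ <;> omega

lemma xor_transfer {a b c d : Prop} (h1 : ¬ (a ↔ b)) (h2 : ¬ (c ↔ d)) (h3 : a ↔ c) :
    b ↔ d := by tauto

lemma card_SAset (hn : 1 ≤ n) (hsub : A ⊆ Finset.range n) :
    (SAset n A).card = 2 * (VS n A).card + 1 := by
  set z := zf n A with hzdef
  have hz0 : z 0 := Or.inl rfl
  have hzn : ¬ z n := by rintro (h | ⟨h1, h2⟩) <;> omega
  have hsplit : SAset n A
      = ((Finset.range n).filter (fun j => z j ∧ ¬ z (j + 1)))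
        ∪ ((Finset.range n).filter (fun j => ¬ z j ∧ z (j + 1))) := by
    rw [← Finset.filter_or]
    exact Finset.filter_congr (fun j _ => by tauto)
  have hdisj : Disjoint ((Finset.range n).filter (fun j => z j ∧ ¬ z (j + 1)))
      ((Finset.range n).filter (fun j => ¬ z j ∧ z (j + 1))) := by
    rw [Finset.disjoint_left]
    intro a ha hb
    have h1 := (Finset.mem_filter.mp ha).2
    have h2 := (Finset.mem_filter.mp hb).2
    tauto
  have halt := alt_count z n
  rw [if_pos hz0, if_neg hzn] at halt
  have hFT : ((Finset.range n).filter (fun j => ¬ z j ∧ z (j + 1))).card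
      = (VS n A).card := by
    refine (Finset.card_bij (fun v _ => v + 1) ?_ ?_ ?_).symm
    · intro v hv
      obtain ⟨hvB, hv1A, hv1ne⟩ :
          (v ∈ Finset.range n ∧ v ∉ A) ∧ v + 1 ∈ A ∧ v + 1 ≠ n - 1 := by
        have := Finset.mem_filter.mp hv
        exact ⟨Finset.mem_sdiff.mp this.1, this.2⟩
      have hv1n : v + 1 < n := by
        have := Finset.mem_range.mp (hsub hv1A); omega
      refine Finset.mem_filter.mpr ⟨Finset.mem_range.mpr hv1n, ?_, ?_⟩
      · rintro (h | ⟨h1, h2⟩)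
        · omega
        · exact hvB.2 (by simpa using h2)
      · exact Or.inr ⟨by omega, by simpa using hv1A⟩
    · intro a _ b _ h
      omega
    · intro j hj
      obtain ⟨hjr, hnzj, hzj1⟩ :
          j ∈ Finset.range n ∧ ¬ z j ∧ z (j + 1) := by
        have := Finset.mem_filter.mp hj
        exact ⟨this.1, this.2⟩
      have hjn := Finset.mem_range.mp hjr
      have hj0 : j ≠ 0 := fun h => hnzj (Or.inl h)
      have hjA : j ∈ A ∧ j + 1 < n := by
        rcases hzj1 with h | ⟨h1, h2⟩
        · omega
        · exact ⟨by simpa using h2, h1⟩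
      have hj1nA : j - 1 ∉ A := fun h => hnzj (Or.inr ⟨hjn, h⟩)
      refine ⟨j - 1, Finset.mem_filter.mpr ⟨Finset.mem_sdiff.mpr
        ⟨Finset.mem_range.mpr (by omega), hj1nA⟩, ?_, ?_⟩, by omega⟩
      · rw [show j - 1 + 1 = j by omega]; exact hjA.1
      · rw [show j - 1 + 1 = j by omega]; omega
  rw [hsplit, Finset.card_union_of_disjoint hdisj, hFT]
  omega

lemma SAset_inj {A' : Finset ℕ} (hn : 1 ≤ n) (hsub : A ⊆ Finset.range n)
    (hsub' : A' ⊆ Finset.range n) (hmem : n - 1 ∈ A) (hmem' : n - 1 ∈ A')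
    (h : SAset n A = SAset n A') : A = A' := by
  have hz : ∀ j, (zf n A j ↔ zf n A' j) := by
    intro j
    induction j with
    | zero => exact iff_of_true (Or.inl rfl) (Or.inl rfl)
    | succ j ih =>
      by_cases hjn : j < n
      · by_cases hjS : j ∈ SAset n A
        · have h1 := (Finset.mem_filter.mp hjS).2
          have h2 := (Finset.mem_filter.mp (h ▸ hjS)).2
          exact xor_transfer h1 h2 ih
        · have h1 : (zf n A j ↔ zf n A (j + 1)) := by
            by_contra hc
            exact hjS (Finset.mem_filter.mpr ⟨Finset.mem_range.mpr hjn, hc⟩)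
          have h2 : (zf n A' j ↔ zf n A' (j + 1)) := by
            by_contra hc
            exact (h ▸ hjS) (Finset.mem_filter.mpr ⟨Finset.mem_range.mpr hjn, hc⟩)
          exact (h1.symm.trans ih).trans h2
      · have hA1 : ¬ zf n A (j + 1) := by rintro (h | ⟨h1, h2⟩) <;> omega
        have hA2 : ¬ zf n A' (j + 1) := by rintro (h | ⟨h1, h2⟩) <;> omega
        exact iff_of_false hA1 hA2
  ext v
  by_cases hv : v = n - 1
  · subst hv; exact iff_of_true hmem hmem'
  · constructor
    · intro hvA
      have hvn : v < n := Finset.mem_range.mp (hsub hvA)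
      have h1 : zf n A (v + 1) := Or.inr ⟨by omega, by simpa using hvA⟩
      rcases (hz (v + 1)).mp h1 with h2 | ⟨h2, h3⟩
      · omega
      · simpa using h3
    · intro hvA
      have hvn : v < n := Finset.mem_range.mp (hsub' hvA)
      have h1 : zf n A' (v + 1) := Or.inr ⟨by omega, by simpa using hvA⟩
      rcases (hz (v + 1)).mpr h1 with h2 | ⟨h2, h3⟩
      · omega
      · simpa using h3

lemma SAset_surj (hn : 1 ≤ n) {S : Finset ℕ} (hS : S ⊆ Finset.range n)
    (hodd : Odd S.card) :
    ∃ A : Finset ℕ, A ⊆ Finset.range n ∧ n - 1 ∈ A ∧ SAset n A = S := by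
  set w : ℕ → Prop := fun j => ¬ Odd ((S.filter (· < j)).card) with hw
  have hw0 : w 0 := by
    have he : S.filter (· < 0) = ∅ := Finset.filter_false_of_mem (by intros; omega)
    simp [hw, he]
  have hwstep : ∀ j, (¬ (w j ↔ w (j + 1))) ↔ j ∈ S := by
    intro j
    have hfil : S.filter (· < j + 1)
        = if j ∈ S then insert j (S.filter (· < j)) else S.filter (· < j) := by
      split_ifs with hj
      · ext x
        simp only [Finset.mem_filter, Finset.mem_insert]
        constructor
        · rintro ⟨hx, hlt⟩
          rcases Nat.lt_succ_iff_lt_or_eq.mp hlt with h | h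
          · exact Or.inr ⟨hx, h⟩
          · exact Or.inl h
        · rintro (rfl | ⟨hx, hlt⟩)
          · exact ⟨hj, by omega⟩
          · exact ⟨hx, by omega⟩
      · ext x
        simp only [Finset.mem_filter]
        constructor
        · rintro ⟨hx, hlt⟩
          refine ⟨hx, ?_⟩
          rcases Nat.lt_succ_iff_lt_or_eq.mp hlt with h | h
          · exact h
          · exact absurd (h ▸ hx) hj
        · rintro ⟨hx, hlt⟩
          exact ⟨hx, by omega⟩
    by_cases hj : j ∈ S
    · have hfil' : S.filter (· < j + 1) = insert j (S.filter (· < j)) := by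
        rw [hfil, if_pos hj]
      have hins : (insert j (S.filter (· < j))).card = (S.filter (· < j)).card + 1 :=
        Finset.card_insert_of_notMem (fun h => by
          simpa using (Finset.mem_filter.mp h).2)
      have hstep : w (j + 1) ↔ ¬ w j := by
        simp only [hw]
        rw [hfil', hins, Nat.odd_add_one]
      simp only [hj, iff_true]
      tauto
    · have hfil' : S.filter (· < j + 1) = S.filter (· < j) := by
        rw [hfil, if_neg hj]
      have hstep : w (j + 1) ↔ w j := by
        simp only [hw]
        rw [hfil']
      simp only [hj, iff_false]
      tauto
  have hwn : ¬ w n := by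
    have he : S.filter (· < n) = S :=
      Finset.filter_true_of_mem (fun x hx => Finset.mem_range.mp (hS hx))
    simp [hw, he, hodd]
  refine ⟨(Finset.range n).filter (fun v => v = n - 1 ∨ w (v + 1)),
    Finset.filter_subset _ _,
    Finset.mem_filter.mpr ⟨Finset.mem_range.mpr (by omega), Or.inl rfl⟩, ?_⟩
  set A := (Finset.range n).filter (fun v => v = n - 1 ∨ w (v + 1)) with hA
  have hzw : ∀ j, j ≤ n → (zf n A j ↔ w j) := by
    intro j hjn
    rcases Nat.eq_zero_or_pos j with rfl | hj0
    · exact iff_of_true (Or.inl rfl) hw0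
    rcases eq_or_lt_of_le hjn with rfl | hjlt
    · exact iff_of_false (by rintro (h | ⟨h1, h2⟩) <;> omega) hwn
    constructor
    · rintro (h | ⟨h1, h2⟩)
      · omega
      · rcases (Finset.mem_filter.mp h2).2 with h3 | h3
        · omega
        · rwa [show j - 1 + 1 = j by omega] at h3
    · intro hwj
      refine Or.inr ⟨hjlt, Finset.mem_filter.mpr ⟨Finset.mem_range.mpr (by omega),
        Or.inr (by rwa [show j - 1 + 1 = j by omega])⟩⟩
  ext j
  simp only [SAset, Finset.mem_filter, Finset.mem_range]
  constructor
  · rintro ⟨hjn, hne⟩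
    have h1 := hzw j (by omega)
    have h2 := hzw (j + 1) (by omega)
    exact (hwstep j).mp (by tauto)
  · intro hjS
    have hjn : j < n := Finset.mem_range.mp (hS hjS)
    have h1 := hzw j (by omega)
    have h2 := hzw (j + 1) (by omega)
    have h3 := (hwstep j).mpr hjS
    exact ⟨hjn, by tauto⟩

lemma count_A (hn : 1 ≤ n) (k : ℕ) :
    ((Finset.range n).powerset.filter
      (fun A => n - 1 ∈ A ∧ (VS n A).card = k)).card = Nat.choose n (2 * k + 1) := by
  have hrw : Nat.choose n (2 * k + 1)
      = ((Finset.range n).powersetCard (2 * k + 1)).card := by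
    rw [Finset.card_powersetCard, Finset.card_range]
  rw [hrw]
  refine Finset.card_bij (fun A _ => SAset n A) ?_ ?_ ?_
  · intro A hA
    obtain ⟨hsubA, hmemA, hkA⟩ :
        A ⊆ Finset.range n ∧ n - 1 ∈ A ∧ (VS n A).card = k := by
      have := Finset.mem_filter.mp hA
      exact ⟨Finset.mem_powerset.mp this.1, this.2⟩
    refine Finset.mem_powersetCard.mpr ⟨Finset.filter_subset _ _, ?_⟩
    rw [card_SAset hn hsubA, hkA]
  · intro A1 h1 A2 h2 heq
    obtain ⟨hs1, hm1, _⟩ :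
        A1 ⊆ Finset.range n ∧ n - 1 ∈ A1 ∧ (VS n A1).card = k := by
      have := Finset.mem_filter.mp h1
      exact ⟨Finset.mem_powerset.mp this.1, this.2⟩
    obtain ⟨hs2, hm2, _⟩ :
        A2 ⊆ Finset.range n ∧ n - 1 ∈ A2 ∧ (VS n A2).card = k := by
      have := Finset.mem_filter.mp h2
      exact ⟨Finset.mem_powerset.mp this.1, this.2⟩
    exact SAset_inj hn hs1 hs2 hm1 hm2 heq
  · intro S hS
    obtain ⟨hSsub, hScard⟩ := Finset.mem_powersetCard.mp hS
    obtain ⟨A, hsubA, hmemA, hSA⟩ := SAset_surj hn hSsub ⟨k, by omega⟩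
    have hVS : (VS n A).card = k := by
      have := card_SAset hn hsubA
      rw [hSA, hScard] at this
      omega
    exact ⟨A, Finset.mem_filter.mpr ⟨Finset.mem_powerset.mpr hsubA, hmemA, hVS⟩, hSA⟩

end BD

theorem card_avoids213_312_bdes (n k : ℕ) (hn : 1 ≤ n) :
    Nat.card {π : Equiv.Perm (Fin n) // (Avoids π perm213 ∧ Avoids π perm312) ∧ bdes π = k} =
    Nat.choose n (2 * k + 1) := by
  classical
  rw [Nat.card_eq_fintype_card, Fintype.card_subtype, ← BD.count_A hn k]
  refine (Finset.card_bij
    (fun A hA => BD.uniPerm n A (Finset.mem_powerset.mp (Finset.mem_filter.mp hA).1))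
    ?_ ?_ ?_).symm
  · intro A hA
    obtain ⟨hsubA, hmemA, hkA⟩ :
        A ⊆ Finset.range n ∧ n - 1 ∈ A ∧ (BD.VS n A).card = k := by
      have := Finset.mem_filter.mp hA
      exact ⟨Finset.mem_powerset.mp this.1, this.2⟩
    refine Finset.mem_filter.mpr ⟨Finset.mem_univ _, ?_, ?_⟩
    · exact (avoids_iff _).mpr (BD.uniPerm_noValley hsubA)
    · exact (BD.bdes_uniPerm hsubA hmemA).trans hkA
  · intro A1 h1 A2 h2 heq
    obtain ⟨hs1, hm1, _⟩ :
        A1 ⊆ Finset.range n ∧ n - 1 ∈ A1 ∧ (BD.VS n A1).card = k := by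
      have := Finset.mem_filter.mp h1
      exact ⟨Finset.mem_powerset.mp this.1, this.2⟩
    obtain ⟨hs2, hm2, _⟩ :
        A2 ⊆ Finset.range n ∧ n - 1 ∈ A2 ∧ (BD.VS n A2).card = k := by
      have := Finset.mem_filter.mp h2
      exact ⟨Finset.mem_powerset.mp this.1, this.2⟩
    exact BD.uniPerm_inj hs1 hs2 hn hm1 hm2 heq
  · intro π hπ
    obtain ⟨hav, hbd⟩ :
        (Avoids π perm213 ∧ Avoids π perm312) ∧ bdes π = k :=
      (Finset.mem_filter.mp hπ).2
    have hnv := (avoids_iff π).mp hav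
    obtain ⟨A, hsubA, hmemA, heq⟩ := BD.noValley_eq_uniPerm π hn hnv
    refine ⟨A, Finset.mem_filter.mpr ⟨Finset.mem_powerset.mpr hsubA, hmemA, ?_⟩, heq.symm⟩
    have h1 := BD.bdes_uniPerm hsubA hmemA
    rw [← heq] at h1
    omega
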